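/- Let α be a nonempty type and m a natural number. Let H1 be a normal subgroup of H2, both subgroups of Perm α, and let P1 be a normal subgroup of P2, both subgroups of Perm (Fin m). Then W(H1, P1) is a subgroup of W(H2, P2) inside Perm(α × Fin m), and its index satisfies [W(H2, P2) : W(H1, P1)] = [H2 : H1]^m · [P2 : P1]. Moreover, if the index type Fin m is replaced by ℕ (infinitely many blocks, with P1 ⊴ P2 ≤ Perm ℕ) and H1 is a proper subgroup of H2, then W(H1, P1) has infinite index in W(H2, P2). -/

import Mathlib

/-- The wreath product `H ≀ P` of `H ≤ Perm α` and `P ≤ Perm I`, realized as a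
subgroup of `Perm (α × I)`. -/
def wreath {α I : Type*} (H : Subgroup (Equiv.Perm α)) (P : Subgroup (Equiv.Perm I)) :
    Subgroup (Equiv.Perm (α × I)) where
  carrier := {g | ∃ σ ∈ P, ∃ h : I → Equiv.Perm α, (∀ i, h i ∈ H) ∧
    ∀ (a : α) (i : I), g (a, i) = (h i a, σ i)}
  one_mem' := ⟨1, P.one_mem, fun _ => 1, fun _ => H.one_mem, fun _ _ => rfl⟩
  mul_mem' := by
    rintro g g' ⟨σ, hσ, h, hh, hg⟩ ⟨σ', hσ', h', hh', hg'⟩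
    refine ⟨σ * σ', P.mul_mem hσ hσ', fun i => h (σ' i) * h' i,
      fun i => H.mul_mem (hh _) (hh' _), fun a i => ?_⟩
    simp [Equiv.Perm.mul_apply, hg', hg]
  inv_mem' := by
    rintro g ⟨σ, hσ, h, hh, hg⟩
    refine ⟨σ⁻¹, P.inv_mem hσ, fun i => (h (σ⁻¹ i))⁻¹,
      fun i => H.inv_mem (hh _), fun a i => ?_⟩
    have key : g ((h (σ⁻¹ i))⁻¹ a, σ⁻¹ i) = (a, i) := by rw [hg]; simp
    rw [← key]; simp

open Equiv
set_option linter.unusedSectionVars false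
set_option linter.unusedVariables false

namespace WreathAux

variable {α I : Type*}

/-- The defining specification of an element of the wreath product. -/
def Spec (g : Perm (α × I)) (σ : Perm I) (h : I → Perm α) : Prop :=
  ∀ (a : α) (i : I), g (a, i) = (h i a, σ i)

theorem mem_wreath {H : Subgroup (Perm α)} {P : Subgroup (Perm I)} {g : Perm (α × I)} :
    g ∈ wreath H P ↔ ∃ σ, σ ∈ P ∧ ∃ h : I → Perm α, (∀ i, h i ∈ H) ∧ Spec g σ h :=
  Iff.rfl

variable [Nonempty α]

theorem spec_unique {g : Perm (α × I)} {σ σ' : Perm I} {h h' : I → Perm α}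
    (hs : Spec g σ h) (hs' : Spec g σ' h') : σ = σ' ∧ h = h' := by
  inhabit α
  constructor
  · ext i
    exact congrArg Prod.snd ((hs default i).symm.trans (hs' default i))
  · funext i
    ext a
    exact congrArg Prod.fst ((hs a i).symm.trans (hs' a i))

theorem spec_mul {g g' : Perm (α × I)} {σ σ' : Perm I} {h h' : I → Perm α}
    (hs : Spec g σ h) (hs' : Spec g' σ' h') :
    Spec (g * g') (σ * σ') (fun i => h (σ' i) * h' i) := by
  intro a i
  rw [Equiv.Perm.mul_apply, hs' a i]
  exact hs _ _

theorem spec_inv {g : Perm (α × I)} {σ : Perm I} {h : I → Perm α} (hs : Spec g σ h) :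
    Spec g⁻¹ σ⁻¹ (fun i => (h (σ⁻¹ i))⁻¹) := by
  intro a i
  have key : g ((h (σ⁻¹ i))⁻¹ a, σ⁻¹ i) = (a, i) := by rw [hs]; simp
  rw [← key]; simp

theorem mem_iff_of_spec {H : Subgroup (Perm α)} {P : Subgroup (Perm I)} {g : Perm (α × I)}
    {σ : Perm I} {h : I → Perm α} (hs : Spec g σ h) :
    g ∈ wreath H P ↔ σ ∈ P ∧ ∀ i, h i ∈ H := by
  constructor
  · rintro ⟨τ, hτ, u, hu, hgu⟩
    obtain ⟨h1, h2⟩ := spec_unique hgu hs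
    subst h1; subst h2
    exact ⟨hτ, hu⟩
  · rintro ⟨h1, h2⟩
    exact ⟨σ, h1, h, h2, hs⟩

/-- Coset criterion. -/
theorem inv_mul_mem_iff {H1 : Subgroup (Perm α)} {P1 : Subgroup (Perm I)}
    {g g' : Perm (α × I)} {σ σ' : Perm I} {h h' : I → Perm α}
    (hs : Spec g σ h) (hs' : Spec g' σ' h') :
    g⁻¹ * g' ∈ wreath H1 P1 ↔ σ⁻¹ * σ' ∈ P1 ∧ ∀ i, (h (σ⁻¹ (σ' i)))⁻¹ * h' i ∈ H1 := by
  have : Spec (g⁻¹ * g') (σ⁻¹ * σ') (fun i => (h (σ⁻¹ (σ' i)))⁻¹ * h' i) := by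
    have := spec_mul (spec_inv hs) hs'
    simpa using this
  exact mem_iff_of_spec this

/-- Explicit construction of a wreath element from data. -/
def wOf (σ : Perm I) (h : I → Perm α) : Perm (α × I) where
  toFun x := (h x.2 x.1, σ x.2)
  invFun x := ((h (σ⁻¹ x.2))⁻¹ x.1, σ⁻¹ x.2)
  left_inv := by rintro ⟨a, i⟩; simp
  right_inv := by rintro ⟨a, i⟩; simp

theorem spec_wOf (σ : Perm I) (h : I → Perm α) : Spec (wOf σ h) σ h := fun _ _ => rfl

section Choice

variable {H : Subgroup (Perm α)} {P : Subgroup (Perm I)}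

noncomputable def wσ (g : Perm (α × I)) (hg : g ∈ wreath H P) : Perm I :=
  (mem_wreath.mp hg).choose

noncomputable def wh (g : Perm (α × I)) (hg : g ∈ wreath H P) : I → Perm α :=
  (mem_wreath.mp hg).choose_spec.2.choose

theorem wσ_mem (g : Perm (α × I)) (hg : g ∈ wreath H P) : wσ g hg ∈ P :=
  (mem_wreath.mp hg).choose_spec.1

theorem wh_mem (g : Perm (α × I)) (hg : g ∈ wreath H P) (i : I) : wh g hg i ∈ H :=
  (mem_wreath.mp hg).choose_spec.2.choose_spec.1 i

theorem w_spec (g : Perm (α × I)) (hg : g ∈ wreath H P) : Spec g (wσ g hg) (wh g hg) :=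
  (mem_wreath.mp hg).choose_spec.2.choose_spec.2

end Choice

variable (H1 H2 : Subgroup (Perm α)) (P1 P2 : Subgroup (Perm I))

/-- The invariant map from `W(H2,P2)` to `(I → H2/H1) × (P2/P1)`. -/
noncomputable def fmap (g : wreath H2 P2) :
    (I → H2 ⧸ H1.subgroupOf H2) × (P2 ⧸ P1.subgroupOf P2) :=
  ((fun i => QuotientGroup.mk
      (⟨wh g.1 g.2 ((wσ g.1 g.2)⁻¹
        (((QuotientGroup.mk (⟨wσ g.1 g.2, wσ_mem g.1 g.2⟩ : P2) :
          P2 ⧸ P1.subgroupOf P2).out : P2).1 i)), wh_mem g.1 g.2 _⟩ : H2)),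
   QuotientGroup.mk (⟨wσ g.1 g.2, wσ_mem g.1 g.2⟩ : P2))

theorem fmap_eq (g : wreath H2 P2) (σ : P2) (h : I → H2)
    (hspec : Spec g.1 σ.1 (fun i => (h i).1)) :
    fmap H1 H2 P1 P2 g =
      ((fun i => QuotientGroup.mk
          (h (σ.1⁻¹ (((QuotientGroup.mk σ : P2 ⧸ P1.subgroupOf P2).out : P2).1 i)))),
       QuotientGroup.mk σ) := by
  obtain ⟨e1, e2⟩ := spec_unique (w_spec g.1 g.2) hspec
  have hA : (⟨wσ g.1 g.2, wσ_mem g.1 g.2⟩ : P2) = σ := Subtype.ext e1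
  have hB : ∀ x, (⟨wh g.1 g.2 x, wh_mem g.1 g.2 x⟩ : H2) = h x := by
    intro x; exact Subtype.ext (congrFun e2 x)
  refine Prod.ext ?_ ?_
  · funext i
    show QuotientGroup.mk (⟨wh g.1 g.2 _, wh_mem g.1 g.2 _⟩ : H2) = _
    rw [hB, hA, e1]
  · show QuotientGroup.mk (⟨wσ g.1 g.2, wσ_mem g.1 g.2⟩ : P2) = _
    rw [hA]

end WreathAux

namespace WreathAux

variable {α I : Type*} [Nonempty α] (H1 H2 : Subgroup (Perm α)) (P1 P2 : Subgroup (Perm I))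

theorem fmap_eq_iff (g g' : wreath H2 P2) :
    fmap H1 H2 P1 P2 g = fmap H1 H2 P1 P2 g' ↔
      g⁻¹ * g' ∈ (wreath H1 P1).subgroupOf (wreath H2 P2) := by
  have hs : Spec g.1 (⟨wσ g.1 g.2, wσ_mem g.1 g.2⟩ : P2).1
      (fun i => ((fun j => (⟨wh g.1 g.2 j, wh_mem g.1 g.2 j⟩ : H2)) i).1) := w_spec g.1 g.2
  have hs' : Spec g'.1 (⟨wσ g'.1 g'.2, wσ_mem g'.1 g'.2⟩ : P2).1
      (fun i => ((fun j => (⟨wh g'.1 g'.2 j, wh_mem g'.1 g'.2 j⟩ : H2)) i).1) := w_spec g'.1 g'.2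
  set σ : P2 := ⟨wσ g.1 g.2, wσ_mem g.1 g.2⟩ with hσdef
  set σ' : P2 := ⟨wσ g'.1 g'.2, wσ_mem g'.1 g'.2⟩ with hσ'def
  set h : I → H2 := fun j => ⟨wh g.1 g.2 j, wh_mem g.1 g.2 j⟩ with hhdef
  set h' : I → H2 := fun j => ⟨wh g'.1 g'.2 j, wh_mem g'.1 g'.2 j⟩ with hh'def
  rw [fmap_eq H1 H2 P1 P2 g σ h hs, fmap_eq H1 H2 P1 P2 g' σ' h' hs']
  rw [Subgroup.mem_subgroupOf]
  have hcoe : ((g⁻¹ * g' : wreath H2 P2) : Perm (α × I)) = g.1⁻¹ * g'.1 := rfl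
  rw [hcoe, inv_mul_mem_iff hs hs', Prod.ext_iff]
  dsimp only
  constructor
  · rintro ⟨h1, h2⟩
    have hτ : (σ⁻¹ * σ' : P2).1 ∈ P1 := Subgroup.mem_subgroupOf.mp (QuotientGroup.eq.mp h2)
    have hτ' : σ.1⁻¹ * σ'.1 ∈ P1 := by simpa using hτ
    refine ⟨hτ', fun j => ?_⟩
    rw [h2] at h1
    have key := congrFun h1 (((QuotientGroup.mk σ' : P2 ⧸ P1.subgroupOf P2).out : P2).1⁻¹
      (σ'.1 j))
    have key2 := Subgroup.mem_subgroupOf.mp (QuotientGroup.eq.mp key)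
    simpa using key2
  · rintro ⟨h1, h2⟩
    have hq : (QuotientGroup.mk σ : P2 ⧸ P1.subgroupOf P2) = QuotientGroup.mk σ' := by
      rw [QuotientGroup.eq, Subgroup.mem_subgroupOf]
      simpa using h1
    refine ⟨?_, hq⟩
    funext i
    rw [hq, QuotientGroup.eq, Subgroup.mem_subgroupOf]
    have := h2 (σ'.1⁻¹ (((QuotientGroup.mk σ' : P2 ⧸ P1.subgroupOf P2).out : P2).1 i))
    simpa using this

theorem fmap_surjective : Function.Surjective (fmap H1 H2 P1 P2) := by
  rintro ⟨u, v⟩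
  have hmem : wOf (v.out : P2).1 (fun i => ((u i).out : H2).1) ∈ wreath H2 P2 :=
    ⟨(v.out : P2).1, (v.out : P2).2, _, fun i => ((u i).out : H2).2, spec_wOf _ _⟩
  refine ⟨⟨_, hmem⟩, ?_⟩
  have hspec : Spec ((⟨_, hmem⟩ : wreath H2 P2) : Perm (α × I)) ((v.out : P2) : Perm I)
      (fun i => (((fun j => (u j).out) i : H2) : Perm α)) :=
    spec_wOf ((v.out : P2) : Perm I) (fun i => (((fun j => (u j).out) i : H2) : Perm α))
  rw [fmap_eq H1 H2 P1 P2 _ v.out (fun i => (u i).out) hspec]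
  have hv : (QuotientGroup.mk v.out : P2 ⧸ P1.subgroupOf P2) = v := Quotient.out_eq v
  refine Prod.ext ?_ hv
  funext i
  rw [hv]
  simp [Quotient.out_eq]

noncomputable def wreathQuotEquiv :
    ((wreath H2 P2) ⧸ (wreath H1 P1).subgroupOf (wreath H2 P2)) ≃
      ((I → H2 ⧸ H1.subgroupOf H2) × (P2 ⧸ P1.subgroupOf P2)) := by
  refine Equiv.ofBijective
    (fun q => Quotient.liftOn' q (fmap H1 H2 P1 P2)
      (fun a b hab => (fmap_eq_iff H1 H2 P1 P2 a b).mpr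
        (QuotientGroup.leftRel_apply.mp hab))) ⟨?_, ?_⟩
  · intro q q'
    refine Quotient.inductionOn₂' q q' (fun a b hab => ?_)
    exact Quotient.sound' (QuotientGroup.leftRel_apply.mpr
      ((fmap_eq_iff H1 H2 P1 P2 a b).mp hab))
  · intro x
    obtain ⟨g, hg⟩ := fmap_surjective H1 H2 P1 P2 x
    exact ⟨QuotientGroup.mk g, hg⟩

theorem wreath_index_eq :
    ((wreath H1 P1).subgroupOf (wreath H2 P2)).index =
      Nat.card (I → H2 ⧸ H1.subgroupOf H2) * (P1.subgroupOf P2).index := by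
  rw [Subgroup.index_eq_card, Nat.card_congr (wreathQuotEquiv H1 H2 P1 P2),
    Nat.card_prod, Subgroup.index_eq_card]

end WreathAux

/-- Wreath products of nested subgroups: if `H1 ⊴ H2 ≤ Perm α` and
`P1 ⊴ P2 ≤ Perm (Fin m)`, then `W(H1,P1) ≤ W(H2,P2)` with index
`[H2:H1]^m ⬝ [P2:P1]`; and over infinitely many blocks (indexed by `ℕ`), if
`H1 < H2` then `W(H1,P1)` has infinite index in `W(H2,P2)`. -/
theorem wreath_mono_and_index (α : Type*) [Nonempty α] (m : ℕ)
    (H1 H2 : Subgroup (Equiv.Perm α)) (hH : H1 ≤ H2)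
    (hHnorm : ∀ h ∈ H2, ∀ k ∈ H1, h * k * h⁻¹ ∈ H1)
    (P1 P2 : Subgroup (Equiv.Perm (Fin m))) (hP : P1 ≤ P2)
    (hPnorm : ∀ p ∈ P2, ∀ q ∈ P1, p * q * p⁻¹ ∈ P1) :
    (wreath H1 P1 ≤ wreath H2 P2 ∧
      ((wreath H1 P1).subgroupOf (wreath H2 P2)).index
        = (H1.subgroupOf H2).index ^ m * (P1.subgroupOf P2).index) ∧
    (∀ Q1 Q2 : Subgroup (Equiv.Perm ℕ), Q1 ≤ Q2 →
      (∀ p ∈ Q2, ∀ q ∈ Q1, p * q * p⁻¹ ∈ Q1) → H1 < H2 →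
      ((wreath H1 Q1).subgroupOf (wreath H2 Q2)).index = 0) := by
  classical
  refine ⟨⟨?_, ?_⟩, ?_⟩
  · rintro g ⟨σ, hσ, h, hh, hg⟩
    exact ⟨σ, hP hσ, h, fun i => hH (hh i), hg⟩
  · rw [WreathAux.wreath_index_eq, Nat.card_fun]
    simp [← Subgroup.index_eq_card, Nat.card_eq_fintype_card]
  · intro Q1 Q2 hQ hQnorm hlt
    obtain ⟨x, hx2, hx1⟩ := SetLike.exists_of_lt hlt
    haveI : Nontrivial (H2 ⧸ H1.subgroupOf H2) := by
      refine ⟨⟨QuotientGroup.mk ⟨x, hx2⟩, QuotientGroup.mk 1, fun hcon => hx1 ?_⟩⟩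
      have := Subgroup.mem_subgroupOf.mp (QuotientGroup.eq.mp hcon)
      simpa using this
    haveI : Infinite (ℕ → H2 ⧸ H1.subgroupOf H2) := Pi.infinite_of_left
    rw [WreathAux.wreath_index_eq, Nat.card_eq_zero_of_infinite, zero_mul]
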